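/- Suppose every element of sl_n(ℂ) can be written as a sum of 4 square-zero matrices in sl_n(ℂ). Let U ≤ sl_n(ℂ) be a subspace, and suppose there exist r₁, …, r_d ∈ sl_n(ℂ) with sl_n(ℂ) = U + [r₁, U] + ⋯ + [r_d, U]. Then there exist g₁, …, g_{8d} ∈ SL_n(ℂ) such that sl_n(ℂ) = U + ∑_{i=1}^{8d} gᵢ U gᵢ⁻¹. In particular the SL_n(ℂ)-additive conjugation diameter of sl_n(ℂ) with respect to U is at most 8d + 1. -/
import Mathlib


/-- The Lie algebra `sl_n(ℂ)` of traceless matrices. -/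
noncomputable def sln (n : ℕ) : Submodule ℂ (Matrix (Fin n) (Fin n) ℂ) :=
  LinearMap.ker (Matrix.traceLinearMap (Fin n) ℂ ℂ)

/-- Conjugation by `g ∈ SL_n(ℂ)` as a linear map `x ↦ g x g⁻¹`. -/
noncomputable def slConj {n : ℕ} (g : Matrix.SpecialLinearGroup (Fin n) ℂ) :
    Matrix (Fin n) (Fin n) ℂ →ₗ[ℂ] Matrix (Fin n) (Fin n) ℂ where
  toFun x := (g : Matrix (Fin n) (Fin n) ℂ) * x * ((g⁻¹ : Matrix.SpecialLinearGroup (Fin n) ℂ) : Matrix (Fin n) (Fin n) ℂ)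
  map_add' x y := by simp [Matrix.mul_add, Matrix.add_mul]
  map_smul' c x := by simp [Matrix.mul_smul, Matrix.smul_mul]

/-- The adjoint operator `ad r : u ↦ [r, u] = ru − ur`. -/
noncomputable def adOp {n : ℕ} (r : Matrix (Fin n) (Fin n) ℂ) :
    Matrix (Fin n) (Fin n) ℂ →ₗ[ℂ] Matrix (Fin n) (Fin n) ℂ :=
  LinearMap.mulLeft ℂ r - LinearMap.mulRight ℂ r

open Matrix Polynomial

lemma aux_det_one_add {n : ℕ} (b : Matrix (Fin n) (Fin n) ℂ) (hb : b ^ 2 = 0) :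
    (1 + b).det = 1 := by
  have hn : IsNilpotent b := ⟨2, hb⟩
  have hu := Matrix.isUnit_charpolyRev_of_isNilpotent hn
  obtain ⟨c, hc, hp⟩ := Polynomial.isUnit_iff.mp hu
  have h0 := b.eval_charpolyRev
  rw [← hp] at h0
  simp only [eval_C] at h0
  have hrev : b.charpolyRev = 1 := by rw [← hp, h0]; simp
  have key : Polynomial.eval (-1 : ℂ) b.charpolyRev = 1 := by rw [hrev]; simp
  rw [Matrix.charpolyRev, ← Polynomial.coe_evalRingHom, RingHom.map_det, RingHom.mapMatrix_apply] at key
  have : (1 - (X : ℂ[X]) • b.map Polynomial.C).map (Polynomial.evalRingHom (-1)) = 1 + b := by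
    ext i j
    simp only [Matrix.map_apply, Matrix.sub_apply, Matrix.add_apply, Matrix.smul_apply,
      Matrix.one_apply, smul_eq_mul, map_sub, _root_.map_mul, eval_X, eval_C]
    split <;> simp
  rwa [this] at key

lemma aux_mul_cancel {n : ℕ} (b : Matrix (Fin n) (Fin n) ℂ) (hb : b ^ 2 = 0) :
    (1 - b) * (1 + b) = 1 := by
  have : (1 - b) * (1 + b) = 1 - b ^ 2 := by noncomm_ring
  rw [this, hb, sub_zero]

/-- The group element `1 + b` for square-zero `b`. -/
noncomputable def gOf {n : ℕ} (b : Matrix (Fin n) (Fin n) ℂ) (hb : b ^ 2 = 0) :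
    Matrix.SpecialLinearGroup (Fin n) ℂ :=
  ⟨1 + b, aux_det_one_add b hb⟩

lemma coe_gOf_inv {n : ℕ} (b : Matrix (Fin n) (Fin n) ℂ) (hb : b ^ 2 = 0) :
    (((gOf b hb)⁻¹ : Matrix.SpecialLinearGroup (Fin n) ℂ) : Matrix (Fin n) (Fin n) ℂ)
      = 1 - b := by
  have h1 : ((gOf b hb : Matrix.SpecialLinearGroup (Fin n) ℂ) : Matrix (Fin n) (Fin n) ℂ) *
      (((gOf b hb)⁻¹ : Matrix.SpecialLinearGroup (Fin n) ℂ) : Matrix (Fin n) (Fin n) ℂ) = 1 := by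
    rw [← Matrix.SpecialLinearGroup.coe_mul, mul_inv_cancel, Matrix.SpecialLinearGroup.coe_one]
  have h2 : (1 - b) * ((gOf b hb : Matrix.SpecialLinearGroup (Fin n) ℂ) :
      Matrix (Fin n) (Fin n) ℂ) = 1 := aux_mul_cancel b hb
  exact (left_inv_eq_right_inv h2 h1).symm

lemma slConj_gOf_apply {n : ℕ} (b : Matrix (Fin n) (Fin n) ℂ) (hb : b ^ 2 = 0)
    (u : Matrix (Fin n) (Fin n) ℂ) :
    slConj (gOf b hb) u = (1 + b) * u * (1 - b) := by
  show ((gOf b hb : Matrix.SpecialLinearGroup (Fin n) ℂ) : Matrix (Fin n) (Fin n) ℂ) * u *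
    (((gOf b hb)⁻¹ : Matrix.SpecialLinearGroup (Fin n) ℂ) : Matrix (Fin n) (Fin n) ℂ) = _
  rw [coe_gOf_inv b hb]
  rfl

lemma adOp_apply {n : ℕ} (x u : Matrix (Fin n) (Fin n) ℂ) :
    adOp x u = x * u - u * x := rfl

lemma adOp_eq_combo {n : ℕ} (x u : Matrix (Fin n) (Fin n) ℂ) (hx : x ^ 2 = 0)
    (hx' : (-x) ^ 2 = 0) :
    adOp x u = (2⁻¹ : ℂ) • slConj (gOf x hx) u - (2⁻¹ : ℂ) • slConj (gOf (-x) hx') u := by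
  rw [slConj_gOf_apply, slConj_gOf_apply, adOp_apply, ← smul_sub]
  have h : (1 + x) * u * (1 - x) - (1 + -x) * u * (1 - -x)
      = (x * u - u * x) + (x * u - u * x) := by noncomm_ring
  rw [h, ← two_smul ℂ (x * u - u * x), smul_smul]
  norm_num

theorem stmt_18 (n d : ℕ)
    (hsq4 : ∀ z : Matrix (Fin n) (Fin n) ℂ, z.trace = 0 →
      ∃ a : Fin 4 → Matrix (Fin n) (Fin n) ℂ,
        (∀ i, a i ^ 2 = 0 ∧ (a i).trace = 0) ∧ z = ∑ i, a i)
    (U : Submodule ℂ (Matrix (Fin n) (Fin n) ℂ)) (hU : U ≤ sln n)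
    (r : Fin d → Matrix (Fin n) (Fin n) ℂ) (hr : ∀ i, (r i).trace = 0)
    (hcov : U ⊔ (⨆ i, Submodule.map (adOp (r i)) U) = sln n) :
    ∃ g : Fin (8 * d) → Matrix.SpecialLinearGroup (Fin n) ℂ,
      U ⊔ (⨆ i, Submodule.map (slConj (g i)) U) = sln n := by
  classical
  choose a ha hsum using fun i => hsq4 (r i) (hr i)
  -- square-zero building blocks indexed by natural numbers
  set b : ℕ → Matrix (Fin n) (Fin n) ℂ := fun m =>
    (if m % 2 = 0 then (1 : ℂ) else -1) •
      (if h : m / 8 < d ∧ m % 8 / 2 < 4 then a ⟨m / 8, h.1⟩ ⟨m % 8 / 2, h.2⟩ else 0) with hbdef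
  have hb : ∀ m, (b m) ^ 2 = 0 := by
    intro m
    rw [hbdef]
    dsimp only
    have key : (if h : m / 8 < d ∧ m % 8 / 2 < 4 then a ⟨m / 8, h.1⟩ ⟨m % 8 / 2, h.2⟩ else 0) ^ 2
        = 0 := by
      split
      · exact (ha _ _).1
      · simp
    rw [_root_.smul_pow, key, smul_zero]
  refine ⟨fun k => gOf (b k.val) (hb k.val), ?_⟩
  set S := ⨆ k : Fin (8 * d), Submodule.map (slConj (gOf (b k.val) (hb k.val))) U with hS
  apply le_antisymm
  · -- everything is traceless
    apply sup_le
    · exact hU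
    · apply iSup_le
      intro k
      rintro _ ⟨u, hu, rfl⟩
      have hu' : u.trace = 0 := hU hu
      show slConj _ u ∈ LinearMap.ker (Matrix.traceLinearMap (Fin n) ℂ ℂ)
      rw [LinearMap.mem_ker]
      set g := gOf (b k.val) (hb k.val)
      have : slConj g u = (g : Matrix (Fin n) (Fin n) ℂ) * u *
          ((g⁻¹ : Matrix.SpecialLinearGroup (Fin n) ℂ) : Matrix (Fin n) (Fin n) ℂ) := rfl
      rw [Matrix.traceLinearMap_apply, this, Matrix.trace_mul_cycle]
      rw [← Matrix.SpecialLinearGroup.coe_mul, inv_mul_cancel,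
        Matrix.SpecialLinearGroup.coe_one, one_mul, hu']
  · rw [← hcov]
    apply sup_le le_sup_left
    apply iSup_le
    intro i
    refine le_trans ?_ le_sup_right
    rintro _ ⟨u, hu, rfl⟩
    -- adOp (r i) u = ∑ j, adOp (a i j) u
    have hsplit : adOp (r i) u = ∑ j : Fin 4, adOp (a i j) u := by
      simp only [adOp_apply, hsum i, Finset.sum_mul, Finset.mul_sum, ← Finset.sum_sub_distrib]
    rw [hsplit]
    apply Submodule.sum_mem
    intro j _
    -- identify b at the two relevant indices
    have hk0 : (8 * i.val + 2 * j.val) < 8 * d := by omega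
    have hk1 : (8 * i.val + 2 * j.val + 1) < 8 * d := by omega
    have hb0 : b (8 * i.val + 2 * j.val) = a i j := by
      rw [hbdef]
      dsimp only
      have e1 : (8 * i.val + 2 * j.val) % 2 = 0 := by omega
      have e2 : (8 * i.val + 2 * j.val) / 8 = i.val := by omega
      have e3 : (8 * i.val + 2 * j.val) % 8 / 2 = j.val := by omega
      rw [e1, e2, e3]
      have hd : i.val < d ∧ j.val < 4 := ⟨i.isLt, j.isLt⟩
      rw [dif_pos hd, if_pos rfl, one_smul]
    have hb1 : b (8 * i.val + 2 * j.val + 1) = -(a i j) := by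
      rw [hbdef]
      dsimp only
      have e1 : ¬ ((8 * i.val + 2 * j.val + 1) % 2 = 0) := by omega
      have e2 : (8 * i.val + 2 * j.val + 1) / 8 = i.val := by omega
      have e3 : (8 * i.val + 2 * j.val + 1) % 8 / 2 = j.val := by omega
      rw [e2, e3, if_neg e1]
      have hd : i.val < d ∧ j.val < 4 := ⟨i.isLt, j.isLt⟩
      rw [dif_pos hd, neg_smul, one_smul]
    set k0 : Fin (8 * d) := ⟨8 * i.val + 2 * j.val, hk0⟩
    set k1 : Fin (8 * d) := ⟨8 * i.val + 2 * j.val + 1, hk1⟩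
    have hx : (a i j) ^ 2 = 0 := (ha i j).1
    have hx' : (-(a i j)) ^ 2 = 0 := by rw [neg_pow]; rw [hx]; simp
    have hcombo := adOp_eq_combo (a i j) u hx hx'
    have m0 : slConj (gOf (b k0.val) (hb k0.val)) u ∈ S := by
      rw [hS]
      exact Submodule.mem_iSup_of_mem k0 (Submodule.mem_map_of_mem hu)
    have m1 : slConj (gOf (b k1.val) (hb k1.val)) u ∈ S := by
      rw [hS]
      exact Submodule.mem_iSup_of_mem k1 (Submodule.mem_map_of_mem hu)
    have ek0 : gOf (b k0.val) (hb k0.val) = gOf (a i j) hx := by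
      apply Subtype.ext
      show (1 : Matrix (Fin n) (Fin n) ℂ) + b k0.val = 1 + a i j
      rw [show (k0.val : ℕ) = 8 * i.val + 2 * j.val from rfl, hb0]
    have ek1 : gOf (b k1.val) (hb k1.val) = gOf (-(a i j)) hx' := by
      apply Subtype.ext
      show (1 : Matrix (Fin n) (Fin n) ℂ) + b k1.val = 1 + -(a i j)
      rw [show (k1.val : ℕ) = 8 * i.val + 2 * j.val + 1 from rfl, hb1]
    rw [ek0] at m0
    rw [ek1] at m1
    rw [hcombo]
    exact Submodule.sub_mem S (Submodule.smul_mem S _ m0) (Submodule.smul_mem S _ m1)
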